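/- For x > 0, the double integral ∫_x^∞ ∫_0^∞ (2y/√(2πt³)) exp(-(y+t)²/(2t)) dt dy equals e^{-2x}. -/

import Mathlib

open MeasureTheory Real

section Helpers
open Set

lemma gauss_cont (y : ℝ) : ContinuousOn (fun s : ℝ => Real.exp (-(s - y / s) ^ 2 / 2)) (Ioi 0) := by
  apply ContinuousOn.rexp
  apply ContinuousOn.div_const
  apply ContinuousOn.neg
  apply ContinuousOn.pow
  exact continuousOn_id.sub (continuousOn_const.div continuousOn_id fun s hs => ne_of_gt hs)

lemma gauss_intOn (y : ℝ) (hy : 0 < y) :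
    IntegrableOn (fun s : ℝ => Real.exp (-(s - y / s) ^ 2 / 2)) (Ioi 0) := by
  apply Integrable.mono'
    (((integrable_exp_neg_mul_sq (by norm_num : (0:ℝ) < 1/2)).integrableOn).const_mul (Real.exp y))
  · exact ((gauss_cont y).aestronglyMeasurable measurableSet_Ioi)
  · rw [ae_restrict_iff' measurableSet_Ioi]
    filter_upwards with s hs
    rw [Real.norm_eq_abs, abs_of_pos (Real.exp_pos _), ← Real.exp_add]
    apply Real.exp_le_exp.2
    have hs' : (0:ℝ) < s := hs
    have h1 : (s - y / s) ^ 2 ≥ s ^ 2 - 2 * y := by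
      have : (s - y / s) ^ 2 = s ^ 2 - 2 * y + (y / s) ^ 2 := by field_simp; ring
      nlinarith [sq_nonneg (y / s)]
    nlinarith

lemma key (y : ℝ) (hy : 0 < y) :
    ∫ s in Ioi (0:ℝ), (y / s ^ 2) * Real.exp (-(s - y / s) ^ 2 / 2)
      = Real.sqrt (2 * π) / 2 := by
  set g : ℝ → ℝ := fun u => Real.exp (-(u - y / u) ^ 2 / 2) with hg
  -- image of y/s
  have himg : (fun s : ℝ => y / s) '' Ioi 0 = Ioi 0 := by
    ext u
    constructor
    · rintro ⟨s, hs, rfl⟩; exact div_pos hy hs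
    · intro hu; exact ⟨y / u, div_pos hy hu, by field_simp⟩
  have hder : ∀ s ∈ Ioi (0:ℝ),
      HasDerivWithinAt (fun s : ℝ => y / s) (-(y / s ^ 2)) (Ioi 0) s := by
    intro s hs
    have := ((hasDerivAt_inv (ne_of_gt hs)).const_mul y).hasDerivWithinAt (s := Ioi (0:ℝ))
    have h2 : y * -(s ^ 2)⁻¹ = -(y / s ^ 2) := by field_simp
    simpa [div_eq_mul_inv, h2] using this
  have hinj : Set.InjOn (fun s : ℝ => y / s) (Ioi 0) := by
    intro a ha b hb h
    simp only [mem_Ioi] at ha hb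
    field_simp at h
    exact h.symm
  -- pointwise : |-(y/s^2)| • g (y/s) = (y/s^2) * g s on Ioi 0
  have hpt : ∀ s ∈ Ioi (0:ℝ),
      |(-(y / s ^ 2))| • g (y / s) = (y / s ^ 2) * g s := by
    intro s hs
    have hs' : (0:ℝ) < s := hs
    have h1 : |(-(y / s ^ 2))| = y / s ^ 2 := by
      rw [abs_neg, abs_of_pos (by positivity)]
    have h2 : g (y / s) = g s := by
      simp only [hg]
      congr 1
      have : y / (y / s) = s := by field_simp
      rw [this]
      ring
    rw [h1, h2, smul_eq_mul]
  -- A = C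
  have hAC : ∫ s in Ioi (0:ℝ), g s = ∫ s in Ioi (0:ℝ), (y / s ^ 2) * g s := by
    conv_lhs => rw [← himg]
    rw [integral_image_eq_integral_abs_deriv_smul measurableSet_Ioi hder hinj]
    exact setIntegral_congr_fun measurableSet_Ioi hpt
  -- C integrable
  have hC_int : IntegrableOn (fun s => (y / s ^ 2) * g s) (Ioi 0) := by
    have := (integrableOn_image_iff_integrableOn_abs_deriv_smul
      measurableSet_Ioi hder hinj g).1 (by rw [himg]; exact gauss_intOn y hy)
    exact this.congr_fun hpt measurableSet_Ioi
  -- A + C = sqrt (2π)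
  have hsum : (∫ s in Ioi (0:ℝ), g s) + ∫ s in Ioi (0:ℝ), (y / s ^ 2) * g s
      = Real.sqrt (2 * π) := by
    have himg2 : (fun s : ℝ => s - y / s) '' Ioi 0 = univ := by
      apply eq_univ_of_forall
      intro u
      set r := Real.sqrt (u ^ 2 + 4 * y) with hr
      have hr2 : r ^ 2 = u ^ 2 + 4 * y := Real.sq_sqrt (by positivity)
      have hru : -u < r := by nlinarith [Real.sqrt_nonneg (u ^ 2 + 4 * y), sq_nonneg (r + u)]
      have hs : 0 < (u + r) / 2 := by linarith
      have hne : u + r ≠ 0 := by linarith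
      exact ⟨(u + r) / 2, hs, by field_simp; nlinarith⟩
    have hder2 : ∀ s ∈ Ioi (0:ℝ),
        HasDerivWithinAt (fun s : ℝ => s - y / s) (1 + y / s ^ 2) (Ioi 0) s := by
      intro s hs
      have h1 := ((hasDerivAt_id s).sub
        ((hasDerivAt_inv (ne_of_gt hs)).const_mul y)).hasDerivWithinAt (s := Ioi (0:ℝ))
      have h2 : (1 : ℝ) - y * -(s ^ 2)⁻¹ = 1 + y / s ^ 2 := by field_simp; ring
      simpa [div_eq_mul_inv, h2, Pi.sub_def] using h1
    have hinj2 : Set.InjOn (fun s : ℝ => s - y / s) (Ioi 0) := by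
      intro a ha b hb h
      simp only [mem_Ioi] at ha hb
      simp only at h
      have ha' := ha.ne'
      have hb' := hb.ne'
      field_simp at h
      nlinarith [mul_pos ha hb]
    have hgauss : ∫ u : ℝ, Real.exp (-u ^ 2 / 2) = Real.sqrt (2 * π) := by
      have := integral_gaussian (1/2 : ℝ)
      rw [show π / (1/2 : ℝ) = 2 * π by ring] at this
      rw [← this]
      congr 1 with u
      congr 1
      ring
    have hchg : ∫ u : ℝ, Real.exp (-u ^ 2 / 2)
        = ∫ s in Ioi (0:ℝ), |1 + y / s ^ 2| • Real.exp (-(s - y / s) ^ 2 / 2) := by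
      rw [← setIntegral_univ, ← himg2]
      exact integral_image_eq_integral_abs_deriv_smul measurableSet_Ioi hder2 hinj2 _
    have hpt2 : ∀ s ∈ Ioi (0:ℝ),
        |1 + y / s ^ 2| • Real.exp (-(s - y / s) ^ 2 / 2) = g s + (y / s ^ 2) * g s := by
      intro s hs
      have hs' : (0:ℝ) < s := hs
      rw [abs_of_pos (by positivity), smul_eq_mul]
      simp only [hg]
      ring
    rw [← hgauss, hchg, setIntegral_congr_fun measurableSet_Ioi hpt2,
      integral_add (gauss_intOn y hy) hC_int]
  linarith [hAC, hsum]

lemma inner_eq (y : ℝ) (hy : 0 < y) :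
    ∫ t in Ioi (0:ℝ), (2 * y / Real.sqrt (2 * π * t ^ 3)) * Real.exp (-(y + t) ^ 2 / (2 * t))
      = 2 * Real.exp (-2 * y) := by
  -- factor out exp(-2y)
  have step1 : ∫ t in Ioi (0:ℝ),
      (2 * y / Real.sqrt (2 * π * t ^ 3)) * Real.exp (-(y + t) ^ 2 / (2 * t))
      = ∫ t in Ioi (0:ℝ), Real.exp (-2 * y) *
          ((2 * y / Real.sqrt (2 * π * t ^ 3)) * Real.exp (-(t - y) ^ 2 / (2 * t))) := by
    apply setIntegral_congr_fun measurableSet_Ioi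
    intro t ht
    have ht' : (0:ℝ) < t := ht
    have hexp : Real.exp (-(y + t) ^ 2 / (2 * t))
        = Real.exp (-2 * y) * Real.exp (-(t - y) ^ 2 / (2 * t)) := by
      rw [← Real.exp_add]
      congr 1
      field_simp
      ring
    dsimp only
    rw [hexp]; ring
  rw [step1, integral_const_mul]
  -- substitution t = s^2
  have himg : (fun s : ℝ => s ^ 2) '' Ioi 0 = Ioi 0 := by
    ext u
    constructor
    · rintro ⟨s, hs, rfl⟩; exact pow_pos (show (0:ℝ) < s from hs) 2
    · intro hu; exact ⟨Real.sqrt u, Real.sqrt_pos.2 hu, Real.sq_sqrt (le_of_lt hu)⟩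
  have hder : ∀ s ∈ Ioi (0:ℝ),
      HasDerivWithinAt (fun s : ℝ => s ^ 2) (2 * s) (Ioi 0) s := by
    intro s _
    simpa using (hasDerivAt_pow 2 s).hasDerivWithinAt
  have hinj : Set.InjOn (fun s : ℝ => s ^ 2) (Ioi 0) := by
    intro a ha b hb h
    simp only [mem_Ioi] at ha hb
    simp only at h
    nlinarith [sq_nonneg (a - b), sq_nonneg (a + b)]
  have step2 : ∫ t in Ioi (0:ℝ),
      (2 * y / Real.sqrt (2 * π * t ^ 3)) * Real.exp (-(t - y) ^ 2 / (2 * t))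
      = ∫ s in Ioi (0:ℝ), (4 / Real.sqrt (2 * π)) *
          ((y / s ^ 2) * Real.exp (-(s - y / s) ^ 2 / 2)) := by
    conv_lhs => rw [← himg]
    rw [integral_image_eq_integral_abs_deriv_smul measurableSet_Ioi hder hinj]
    apply setIntegral_congr_fun measurableSet_Ioi
    intro s hs
    have hs' : (0:ℝ) < s := hs
    have hsqrt : Real.sqrt (2 * π * (s ^ 2) ^ 3) = Real.sqrt (2 * π) * s ^ 3 := by
      rw [show 2 * π * (s ^ 2) ^ 3 = (2 * π) * (s ^ 3) ^ 2 by ring,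
        Real.sqrt_mul (by positivity), Real.sqrt_sq (by positivity)]
    have hexp2 : -(s ^ 2 - y) ^ 2 / (2 * s ^ 2) = -(s - y / s) ^ 2 / 2 := by
      field_simp
    dsimp only
    rw [smul_eq_mul, abs_of_pos (by positivity : (0:ℝ) < 2 * s), hsqrt, hexp2]
    have hπ : Real.sqrt (2 * π) ≠ 0 := by positivity
    field_simp
    ring
  rw [step2, integral_const_mul, key y hy]
  have hπ : Real.sqrt (2 * π) ≠ 0 := by positivity
  field_simp
  ring

end Helpers

open Set in
/-- Integrating the entrance law of the excursion measure of Brownian motion with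
drift `-1` over time `t ∈ (0,∞)` and heights `y > x` yields the exponential tail:
`∫_x^∞ ∫_0^∞ (2y/√(2πt³)) exp(-(y+t)²/(2t)) dt dy = e^{-2x}` for `x > 0`. -/
theorem excursion_double_integral (x : ℝ) (hx : 0 < x) :
    (∫ y in Set.Ioi x, ∫ t in Set.Ioi (0 : ℝ),
        (2 * y / Real.sqrt (2 * π * t ^ 3)) * Real.exp (-(y + t) ^ 2 / (2 * t)))
      = Real.exp (-2 * x) := by
  have step1 : (∫ y in Set.Ioi x, ∫ t in Set.Ioi (0 : ℝ),
        (2 * y / Real.sqrt (2 * π * t ^ 3)) * Real.exp (-(y + t) ^ 2 / (2 * t)))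
      = ∫ y in Set.Ioi x, 2 * Real.exp (-2 * y) := by
    apply setIntegral_congr_fun measurableSet_Ioi
    intro y hy
    exact inner_eq y (hx.trans hy)
  rw [step1]
  have hderiv : ∀ y ∈ Ioi x, HasDerivAt (fun y => -Real.exp (-2 * y)) (2 * Real.exp (-2 * y)) y := by
    intro y _
    have h1 : HasDerivAt (fun y : ℝ => -2 * y) (-2) y := by
      simpa using (hasDerivAt_id y).const_mul (-2)
    have := (h1.exp).neg
    simpa [neg_mul, mul_comm, Pi.neg_def] using this
  have hint : IntegrableOn (fun y => 2 * Real.exp (-2 * y)) (Ioi x) :=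
    (exp_neg_integrableOn_Ioi x (by norm_num : (0:ℝ) < 2)).const_mul 2
  have htend : Filter.Tendsto (fun y => -Real.exp (-2 * y)) Filter.atTop (nhds 0) := by
    rw [show (0:ℝ) = -0 by norm_num]
    apply Filter.Tendsto.neg
    apply Real.tendsto_exp_atBot.comp
    apply Filter.Tendsto.const_mul_atTop_of_neg (by norm_num : (-2:ℝ) < 0) Filter.tendsto_id
  have := integral_Ioi_of_hasDerivAt_of_tendsto
    (Continuous.continuousWithinAt (by fun_prop))
    hderiv hint htend
  rw [this]
  ring
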